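/- In a complete stratified precubical set the degeneracies satisfy ε_k ε_l x = ε_{l+1} ε_k x for k ≤ l. -/

import Mathlib

namespace CubicalNerve

/-- Signs: `true` is `+`, `false` is `−`, as an integer `±1`. -/
def sgn (α : Bool) : ℤ := if α then 1 else -1

/-- A stratified precubical set: a sequence of sets `X n` with face operations
`∂_i^α : X n → X (n-1)` (with `i : Fin n`, i.e. `i+1` in the paper's 1-indexing)
satisfying the precubical relations, together with a class of thin `n`-cubes for
`n ≥ 1` (a `0`-cube is never thin). -/
structure SPS where
  X : ℕ → Type
  face : ∀ {n : ℕ}, Fin n → Bool → X n → X (n - 1)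
  face_rel : ∀ {n : ℕ} (j : Fin n) (i : Fin (n - 1)) (h : (j : ℕ) ≤ (i : ℕ)) (α β : Bool)
      (x : X n),
    face i α (face j β x) =
      face ⟨(j : ℕ), lt_of_le_of_lt h i.isLt⟩ β
        (face ⟨(i : ℕ) + 1, by have := i.isLt; omega⟩ α x)
  thin : ∀ {n : ℕ}, X n → Prop
  thin_zero : ∀ x : X 0, ¬ thin x

/-- The face operation `∂_i^α` with a 1-indexed natural number index (clamped into
range); the identity map in dimension `0`. -/
def SPS.faceN (P : SPS) (i : ℕ) (α : Bool) : ∀ {n : ℕ}, P.X n → P.X (n - 1)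
  | 0, x => x
  | m + 1, x =>
      P.face (⟨min (i - 1) m, Nat.lt_succ_of_le (Nat.min_le_right _ _)⟩ : Fin (m + 1)) α x

/-- The action of a nonidentity precubical operation, written as a nonempty list
`(p :: L)` of 1-indexed (index, sign) pairs composed right-to-left (so the last
entry of the list is applied first), on a box or shell `b` (given as a family of
`m`-cubes indexed by all of `Fin (m+1) × Bool`): the last factor picks out an entry
of `b`, and the remaining factors act by face operations. -/
def SPS.apBoxAux (P : SPS) {m : ℕ} (b : Fin (m + 1) → Bool → P.X m) :
    (ℕ × Bool) → (L : List (ℕ × Bool)) → P.X (m - L.length)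
  | p, [] => b ⟨min (p.1 - 1) m, Nat.lt_succ_of_le (Nat.min_le_right _ _)⟩ p.2
  | p, q :: L => P.faceN p.1 p.2 (P.apBoxAux b q L)

/-- `L` is the standard decomposition of a precubical operation on `n`-cubes:
its 1-indexed indices are strictly increasing and lie in `{1, …, n}`. -/
def IsStdList (n : ℕ) (L : List (ℕ × Bool)) : Prop :=
  L.Chain' (fun p q => p.1 < q.1) ∧ ∀ p ∈ L, 1 ≤ p.1 ∧ p.1 ≤ n

/-- Insertion of a factor into a standard decomposition, preserving the order. -/
def insSorted (a : ℕ × Bool) : List (ℕ × Bool) → List (ℕ × Bool)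
  | [] => [a]
  | p :: L => if a.1 ≤ p.1 then a :: p :: L else p :: insSorted a L

/-- The standard decomposition `L` has constant sign: `(−1)^{i(r)−r} α(r)` is the same
for all `r`, where `∂_{i(r)}^{α(r)}` is the `r`-th factor (`r` 1-indexed). -/
def ConstSign (L : List (ℕ × Bool)) : Prop :=
  ∃ ε : ℤ, ∀ (t : ℕ) (h : t < L.length),
    (-1 : ℤ) ^ ((L.get ⟨t, h⟩).1 + t + 1) * sgn (L.get ⟨t, h⟩).2 = ε

/-- The precubical operation with standard decomposition `L` (on `n`-cubes) is
complementary to the face operation `∂_k^γ` (`k` 1-indexed): `L` has no factor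
`∂_k^±`, and inserting `∂_k^{−γ}` produces a standard decomposition with constant
sign. -/
def ComplOp (n k : ℕ) (γ : Bool) (L : List (ℕ × Bool)) : Prop :=
  IsStdList n L ∧ (∀ p ∈ L, p.1 ≠ k) ∧ ConstSign (insSorted (k, !γ) L)

/-- The face operation `∂_l^δ` is complementary to `∂_k^γ` (1-indexed). -/
def FaceComplOp (n k : ℕ) (γ : Bool) (l : ℕ) (δ : Bool) : Prop := ComplOp n k γ [(l, δ)]

/-- `b` is an `(m+1)`-box opposite `∂_k^γ`, recorded as a total family of `m`-cubes
whose value at `(k, γ)` is irrelevant: the compatibility conditions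
`∂_i^α b_j^β = ∂_j^β b_{i+1}^α` hold whenever neither index involved is `(k, γ)`. -/
def SPS.IsBox (P : SPS) {m : ℕ} (k : Fin (m + 1)) (γ : Bool)
    (b : Fin (m + 1) → Bool → P.X m) : Prop :=
  ∀ (j : Fin (m + 1)) (i : Fin m) (h : (j : ℕ) ≤ (i : ℕ)) (α β : Bool),
    ((j, β) : Fin (m + 1) × Bool) ≠ (k, γ) →
    ((⟨(i : ℕ) + 1, by have := i.isLt; omega⟩, α) : Fin (m + 1) × Bool) ≠ (k, γ) →
    P.face i α (b j β) =
      P.face ⟨(j : ℕ), lt_of_le_of_lt h i.isLt⟩ β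
        (b ⟨(i : ℕ) + 1, by have := i.isLt; omega⟩ α)

/-- `s` is an `(m+1)`-shell: a family of `m`-cubes indexed by all the face operations,
with `∂_i^α s_j^β = ∂_j^β s_{i+1}^α` for `i ≥ j`. -/
def SPS.IsShell (P : SPS) {m : ℕ} (s : Fin (m + 1) → Bool → P.X m) : Prop :=
  ∀ (j : Fin (m + 1)) (i : Fin m) (h : (j : ℕ) ≤ (i : ℕ)) (α β : Bool),
    P.face i α (s j β) =
      P.face ⟨(j : ℕ), lt_of_le_of_lt h i.isLt⟩ β
        (s ⟨(i : ℕ) + 1, by have := i.isLt; omega⟩ α)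

/-- The box `b` opposite `∂_k^γ` is admissible: `θ b` is thin for every non-identity
precubical operation `θ` complementary to `∂_k^γ`. -/
def SPS.AdmBox (P : SPS) {m : ℕ} (k : Fin (m + 1)) (γ : Bool)
    (b : Fin (m + 1) → Bool → P.X m) : Prop :=
  P.IsBox k γ b ∧
  ∀ (p : ℕ × Bool) (L : List (ℕ × Bool)),
    ComplOp (m + 1) ((k : ℕ) + 1) γ (p :: L) → P.thin (P.apBoxAux b p L)

/-- The shell `s` is admissible: there are distinct, mutually non-complementary face
operations `∂_k^γ` and `∂_l^δ` with `s_k^γ = s_l^δ` such that the boxes obtained by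
removing either are admissible. -/
def SPS.AdmShell (P : SPS) {m : ℕ} (s : Fin (m + 1) → Bool → P.X m) : Prop :=
  P.IsShell s ∧
  ∃ (k l : Fin (m + 1)) (γ δ : Bool),
    ((k, γ) : Fin (m + 1) × Bool) ≠ (l, δ) ∧
    ¬ FaceComplOp (m + 1) ((k : ℕ) + 1) γ ((l : ℕ) + 1) δ ∧
    ¬ FaceComplOp (m + 1) ((l : ℕ) + 1) δ ((k : ℕ) + 1) γ ∧
    s k γ = s l δ ∧ P.AdmBox k γ s ∧ P.AdmBox l δ s

/-- `x` is a filler of the box `b` opposite `∂_k^γ`. -/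
def SPS.FillsBox (P : SPS) {m : ℕ} (k : Fin (m + 1)) (γ : Bool)
    (b : Fin (m + 1) → Bool → P.X m) (x : P.X (m + 1)) : Prop :=
  ∀ (i : Fin (m + 1)) (α : Bool), ((i, α) : Fin (m + 1) × Bool) ≠ (k, γ) →
    P.face i α x = b i α

/-- `x` is a filler of the shell `s`. -/
def SPS.FillsShell (P : SPS) {m : ℕ} (s : Fin (m + 1) → Bool → P.X m)
    (x : P.X (m + 1)) : Prop :=
  ∀ (i : Fin (m + 1)) (α : Bool), P.face i α x = s i α

/-- `P` is a *complete* stratified precubical set: every admissible box and every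
admissible shell has a unique thin filler, and if `x` is the thin filler of an
admissible box `b` opposite `∂_k^γ` all of whose entries are thin, then the
additional face `∂_k^γ x` is thin as well. -/
def SPS.IsComplete (P : SPS) : Prop :=
  (∀ (m : ℕ) (k : Fin (m + 1)) (γ : Bool) (b : Fin (m + 1) → Bool → P.X m),
     P.AdmBox k γ b → ∃! x : P.X (m + 1), P.thin x ∧ P.FillsBox k γ b x) ∧
  (∀ (m : ℕ) (s : Fin (m + 1) → Bool → P.X m),
     P.AdmShell s → ∃! x : P.X (m + 1), P.thin x ∧ P.FillsShell s x) ∧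
  (∀ (m : ℕ) (k : Fin (m + 1)) (γ : Bool) (b : Fin (m + 1) → Bool → P.X m)
     (x : P.X (m + 1)),
     P.AdmBox k γ b → P.thin x → P.FillsBox k γ b x →
     (∀ (i : Fin (m + 1)) (α : Bool), ((i, α) : Fin (m + 1) × Bool) ≠ (k, γ) →
        P.thin (b i α)) →
     P.thin (P.face k γ x))

/-- `E` is the system of degeneracy operations `ε` of a complete stratified precubical
set: `E n k x` (`x` an `n`-cube, `k : Fin (n+1)`, i.e. `ε_{k+1}` in 1-indexed notation)
is thin with faces `∂_i^α ε_k x = ε_{k-1} ∂_i^α x` for `i < k`, `∂_k^± ε_k x = x`,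
and `∂_i^α ε_k x = ε_k ∂_{i-1}^α x` for `i > k`. -/
def SPS.IsDegSys (P : SPS) (E : ∀ n : ℕ, Fin (n + 1) → P.X n → P.X (n + 1)) : Prop :=
  (∀ (n : ℕ) (k : Fin (n + 1)) (x : P.X n), P.thin (E n k x)) ∧
  (∀ (n : ℕ) (k : Fin (n + 1)) (α : Bool) (x : P.X n), P.face k α (E n k x) = x) ∧
  (∀ (n : ℕ) (k i : Fin (n + 2)) (α : Bool) (x : P.X (n + 1)) (h : (i : ℕ) < (k : ℕ)),
     P.face i α (E (n + 1) k x) =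
       E n ⟨(k : ℕ) - 1, by have := k.isLt; omega⟩
         (P.face ⟨(i : ℕ), by have := k.isLt; omega⟩ α x)) ∧
  (∀ (n : ℕ) (k i : Fin (n + 2)) (α : Bool) (x : P.X (n + 1)) (h : (k : ℕ) < (i : ℕ)),
     P.face i α (E (n + 1) k x) =
       E n ⟨(k : ℕ), by have := i.isLt; omega⟩
         (P.face ⟨(i : ℕ) - 1, by have := i.isLt; omega⟩ α x))

/-- `Γ` is the system of connection operations of a complete stratified precubical set
(`Γ n k γ x` for `x` an `(n+1)`-cube and `k : Fin (n+1)`, i.e. `Γ_{k+1}^γ`). -/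
def SPS.IsConnSys (P : SPS) (E : ∀ n : ℕ, Fin (n + 1) → P.X n → P.X (n + 1))
    (Γ : ∀ n : ℕ, Fin (n + 1) → Bool → P.X (n + 1) → P.X (n + 2)) : Prop :=
  (∀ (n : ℕ) (k : Fin (n + 1)) (γ : Bool) (x : P.X (n + 1)), P.thin (Γ n k γ x)) ∧
  (∀ (n : ℕ) (k : Fin (n + 1)) (γ : Bool) (x : P.X (n + 1)),
     P.face k.castSucc γ (Γ n k γ x) = x ∧ P.face k.succ γ (Γ n k γ x) = x) ∧
  (∀ (n : ℕ) (k : Fin (n + 1)) (γ : Bool) (x : P.X (n + 1)),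
     P.face k.castSucc (!γ) (Γ n k γ x) = E n k (P.face k (!γ) x) ∧
     P.face k.succ (!γ) (Γ n k γ x) = E n k (P.face k (!γ) x)) ∧
  (∀ (n : ℕ) (k : Fin (n + 2)) (γ : Bool) (i : Fin (n + 3)) (α : Bool) (x : P.X (n + 2))
     (h : (i : ℕ) < (k : ℕ)),
     P.face i α (Γ (n + 1) k γ x) =
       Γ n ⟨(k : ℕ) - 1, by have := k.isLt; omega⟩ γ
         (P.face ⟨(i : ℕ), by have := k.isLt; omega⟩ α x)) ∧
  (∀ (n : ℕ) (k : Fin (n + 2)) (γ : Bool) (i : Fin (n + 3)) (α : Bool) (x : P.X (n + 2))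
     (h : (k : ℕ) + 1 < (i : ℕ)),
     P.face i α (Γ (n + 1) k γ x) =
       Γ n ⟨(k : ℕ), by have := i.isLt; omega⟩ γ
         (P.face ⟨(i : ℕ) - 1, by have := i.isLt; omega⟩ α x))

/-- `G` is the system of composers of a complete stratified precubical set:
whenever `∂_k^+ x = ∂_k^- y`, the `(n+2)`-cube `G n k x y` is thin and has the faces
prescribed in the definition of the composer `G_k(x, y)` (all of them except the one
opposite `∂_k^-`). -/
def SPS.IsCompSys (P : SPS) (E : ∀ n : ℕ, Fin (n + 1) → P.X n → P.X (n + 1))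
    (G : ∀ n : ℕ, Fin (n + 1) → P.X (n + 1) → P.X (n + 1) → P.X (n + 2)) : Prop :=
  (∀ (n : ℕ) (k : Fin (n + 1)) (x y : P.X (n + 1)),
     P.face k true x = P.face k false y → P.thin (G n k x y)) ∧
  (∀ (n : ℕ) (k : Fin (n + 1)) (x y : P.X (n + 1)),
     P.face k true x = P.face k false y →
       P.face k.castSucc true (G n k x y) = y ∧
       P.face k.succ false (G n k x y) = x ∧
       P.face k.succ true (G n k x y) = E n k (P.face k true y)) ∧
  (∀ (n : ℕ) (k : Fin (n + 2)) (i : Fin (n + 3)) (α : Bool) (x y : P.X (n + 2)),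
     P.face k true x = P.face k false y → ∀ h : (i : ℕ) < (k : ℕ),
     P.face i α (G (n + 1) k x y) =
       G n ⟨(k : ℕ) - 1, by have := k.isLt; omega⟩
         (P.face ⟨(i : ℕ), by have := k.isLt; omega⟩ α x)
         (P.face ⟨(i : ℕ), by have := k.isLt; omega⟩ α y)) ∧
  (∀ (n : ℕ) (k : Fin (n + 2)) (i : Fin (n + 3)) (α : Bool) (x y : P.X (n + 2)),
     P.face k true x = P.face k false y → ∀ h : (k : ℕ) + 1 < (i : ℕ),
     P.face i α (G (n + 1) k x y) =
       G n ⟨(k : ℕ), by have := i.isLt; omega⟩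
         (P.face ⟨(i : ℕ) - 1, by have := i.isLt; omega⟩ α x)
         (P.face ⟨(i : ℕ) - 1, by have := i.isLt; omega⟩ α y))

/-- The composite `x ∘_k y = ∂_k^- G_k(x, y)`. -/
def SPS.cmp (P : SPS) (G : ∀ n : ℕ, Fin (n + 1) → P.X (n + 1) → P.X (n + 1) → P.X (n + 2))
    {n : ℕ} (k : Fin (n + 1)) (x y : P.X (n + 1)) : P.X (n + 1) :=
  P.face k.castSucc false (G n k x y)


/-! Auxiliary machinery for the proof of `deg_deg`. -/

/-- `y` is a degeneracy in direction `a` (0-indexed). -/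
def DegAt (P : SPS) (E : ∀ n : ℕ, Fin (n + 1) → P.X n → P.X (n + 1)) (a : ℕ) :
    ∀ {d : ℕ}, P.X d → Prop
  | 0, _ => False
  | e + 1, y => ∃ (ha : a < e + 1) (z : P.X e), y = E e ⟨a, ha⟩ z

/-- Apply a list of (1-indexed) face operations, rightmost first. -/
def applyL (P : SPS) : (L : List (ℕ × Bool)) → ∀ {d : ℕ}, P.X d → P.X (d - L.length)
  | [], _, y => y
  | p :: L, _, y => P.faceN p.1 p.2 (applyL P L y)

lemma thin_congr (P : SPS) {d₁ d₂ : ℕ} (h : d₁ = d₂) {x : P.X d₁} {y : P.X d₂}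
    (e : HEq x y) (hy : P.thin y) : P.thin x := by subst h; cases e; exact hy

lemma degAt_congr (P : SPS) (E : ∀ n : ℕ, Fin (n + 1) → P.X n → P.X (n + 1))
    {d₁ d₂ : ℕ} (h : d₁ = d₂) {x : P.X d₁} {y : P.X d₂} (e : HEq x y) {a : ℕ}
    (hy : DegAt P E a y) : DegAt P E a x := by subst h; cases e; exact hy

lemma faceN_congr (P : SPS) {d₁ d₂ : ℕ} (h : d₁ = d₂) {x : P.X d₁} {y : P.X d₂}
    (e : HEq x y) (i : ℕ) (α : Bool) : HEq (P.faceN i α x) (P.faceN i α y) := by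
  subst h; cases e; rfl

lemma degAt_thin (P : SPS) (E : ∀ n : ℕ, Fin (n + 1) → P.X n → P.X (n + 1))
    (hE : P.IsDegSys E) {a d : ℕ} {y : P.X d} (h : DegAt P E a y) : P.thin y := by
  cases d with
  | zero => exact h.elim
  | succ e => obtain ⟨ha, z, rfl⟩ := h; exact hE.1 e ⟨a, ha⟩ z

lemma applyL_snoc (P : SPS) (L : List (ℕ × Bool)) (q : ℕ × Bool) {d : ℕ} (y : P.X d) :
    HEq (applyL P (L ++ [q]) y) (applyL P L (P.faceN q.1 q.2 y)) := by
  induction L with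
  | nil => exact HEq.rfl
  | cons p L ih =>
    exact faceN_congr P (by simp; omega) ih p.1 p.2

lemma degAt_faceN (P : SPS) (E : ∀ n : ℕ, Fin (n + 1) → P.X n → P.X (n + 1))
    (hE : P.IsDegSys E) {e a : ℕ} {y : P.X (e + 2)} (hy : DegAt P E a y)
    (i : ℕ) (α : Bool) (h1 : 1 ≤ i) (h2 : i ≤ e + 2) (h3 : i ≠ a + 1) :
    DegAt P E (if i ≤ a then a - 1 else a) (P.faceN i α y) := by
  obtain ⟨ha, z, rfl⟩ := hy
  have hN : P.faceN i α (E (e + 1) ⟨a, ha⟩ z) =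
      P.face ⟨i - 1, by omega⟩ α (E (e + 1) ⟨a, ha⟩ z) := by
    show P.face _ α _ = _
    congr 1
    exact Fin.ext (by simp; omega)
  rw [hN]
  rcases Nat.lt_trichotomy (i - 1) a with hlt | heq | hgt
  · rw [hE.2.2.1 e ⟨a, ha⟩ ⟨i - 1, by omega⟩ α z hlt, if_pos (by omega)]
    exact ⟨by omega, _, rfl⟩
  · exact absurd (by omega : i = a + 1) h3
  · rw [hE.2.2.2 e ⟨a, ha⟩ ⟨i - 1, by omega⟩ α z hgt, if_neg (by omega)]
    exact ⟨by omega, _, rfl⟩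

lemma degAt_applyL (P : SPS) (E : ∀ n : ℕ, Fin (n + 1) → P.X n → P.X (n + 1))
    (hE : P.IsDegSys E) (L : List (ℕ × Bool)) :
    ∀ {d : ℕ} (a : ℕ) (y : P.X d), DegAt P E a y →
      L.Pairwise (fun p q => p.1 < q.1) →
      (∀ p ∈ L, 1 ≤ p.1 ∧ p.1 ≤ d ∧ p.1 ≠ a + 1) →
      L.length < d →
      ∃ a', DegAt P E a' (applyL P L y) := by
  induction L using List.reverseRecOn with
  | nil => exact fun a y hy _ _ _ => ⟨a, hy⟩
  | append_singleton L q ih =>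
    intro d a y hy hpw hmem hlen
    obtain ⟨e, rfl⟩ : ∃ e, d = e + 2 := ⟨d - 2, by
      have : L.length + 1 < d := by simpa using hlen
      omega⟩
    have hq := hmem q (by simp)
    have hface := degAt_faceN P E hE hy q.1 q.2 hq.1 hq.2.1 hq.2.2
    have hpwsplit := List.pairwise_append.mp hpw
    have hlast : ∀ p ∈ L, p.1 < q.1 := fun p hp => hpwsplit.2.2 p hp q (by simp)
    have hlen' : L.length + 1 < e + 2 := by simpa using hlen
    obtain ⟨a', h'⟩ := ih (if q.1 ≤ a then a - 1 else a) (P.faceN q.1 q.2 y) hface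
      hpwsplit.1
      (by
        intro p hp
        have h1 := hmem p (by simp [hp])
        have h2 := hlast p hp
        refine ⟨h1.1, by omega, ?_⟩
        split_ifs with hqa
        · omega
        · exact h1.2.2)
      (by omega)
    exact ⟨a', degAt_congr P E (by simp) (applyL_snoc P L q y) h'⟩

lemma apBoxAux_heq (P : SPS) {m : ℕ} (y : P.X (m + 1)) (L : List (ℕ × Bool)) :
    ∀ p : ℕ × Bool,
      HEq (P.apBoxAux (fun i α => P.face i α y) p L) (applyL P (p :: L) y) := by
  induction L with
  | nil => exact fun p => HEq.rfl
  | cons q L ih =>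
    exact fun p => faceN_congr P (by simp) (ih q) p.1 p.2

lemma length_lt_of_pairwise (L : List (ℕ × Bool)) (N c : ℕ) (hc1 : 1 ≤ c) (hc2 : c ≤ N)
    (hpw : L.Pairwise fun p q => p.1 < q.1)
    (hmem : ∀ p ∈ L, 1 ≤ p.1 ∧ p.1 ≤ N ∧ p.1 ≠ c) : L.length < N := by
  have hnd : (L.map Prod.fst).Nodup :=
    List.pairwise_map.mpr (hpw.imp fun h => Nat.ne_of_lt h)
  have hsub : (L.map Prod.fst).toFinset ⊆ (Finset.Icc 1 N).erase c := by
    intro x hx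
    rw [List.mem_toFinset, List.mem_map] at hx
    obtain ⟨p, hp, rfl⟩ := hx
    have := hmem p hp
    rw [Finset.mem_erase, Finset.mem_Icc]
    exact ⟨this.2.2, this.1, this.2.1⟩
  have hcard : ((Finset.Icc 1 N).erase c).card = N - 1 := by
    rw [Finset.card_erase_of_mem (by rw [Finset.mem_Icc]; omega), Nat.card_Icc]
    omega
  have := Finset.card_le_card hsub
  rw [hcard, List.toFinset_card_of_nodup hnd, List.length_map] at this
  omega

/-- The common value of the faces at `k`. -/
lemma face_eq_at_k (P : SPS) (E : ∀ n : ℕ, Fin (n + 1) → P.X n → P.X (n + 1))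
    (hE : P.IsDegSys E) (n : ℕ) (l : Fin (n + 1)) (k : Fin (n + 2))
    (h : (k : ℕ) ≤ (l : ℕ)) (x : P.X n) (α : Bool) :
    P.face k α (E (n + 1) l.succ (E n ⟨(k : ℕ), lt_of_le_of_lt h l.isLt⟩ x)) =
      P.face k α (E (n + 1) k (E n l x)) := by
  rw [hE.2.1 (n + 1) k α (E n l x)]
  rw [hE.2.2.1 n l.succ k α _ (by simp only [Fin.val_succ]; omega)]
  rw [hE.2.1 n ⟨(k : ℕ), lt_of_le_of_lt h l.isLt⟩ α x]
  exact congrArg (fun t : Fin (n + 1) => E n t x) (Fin.ext (by simp [Fin.val_succ]))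

/-- The common value of the faces at `l.succ`. -/
lemma face_eq_at_lsucc (P : SPS) (E : ∀ n : ℕ, Fin (n + 1) → P.X n → P.X (n + 1))
    (hE : P.IsDegSys E) (n : ℕ) (l : Fin (n + 1)) (k : Fin (n + 2))
    (h : (k : ℕ) ≤ (l : ℕ)) (x : P.X n) (α : Bool) :
    P.face l.succ α (E (n + 1) l.succ (E n ⟨(k : ℕ), lt_of_le_of_lt h l.isLt⟩ x)) =
      P.face l.succ α (E (n + 1) k (E n l x)) := by
  rw [hE.2.1 (n + 1) l.succ α]
  rw [hE.2.2.2 n k l.succ α _ (by simp only [Fin.val_succ]; omega)]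
  have hidx : (⟨((l.succ : Fin (n + 2)) : ℕ) - 1, by have := l.isLt; simp [Fin.val_succ]; omega⟩ :
      Fin (n + 1)) = l := Fin.ext (by simp [Fin.val_succ])
  rw [hidx, hE.2.1 n l α x]

/-- The uniqueness argument: if the two iterated degeneracies have the same faces,
they are equal. -/
lemma deg_deg_of_faces (P : SPS) (hP : P.IsComplete)
    (E : ∀ n : ℕ, Fin (n + 1) → P.X n → P.X (n + 1)) (hE : P.IsDegSys E)
    (n : ℕ) (l : Fin (n + 1)) (k : Fin (n + 2)) (h : (k : ℕ) ≤ (l : ℕ)) (x : P.X n)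
    (hfaces : ∀ (i : Fin (n + 2)) (α : Bool),
      P.face i α (E (n + 1) l.succ (E n ⟨(k : ℕ), lt_of_le_of_lt h l.isLt⟩ x)) =
        P.face i α (E (n + 1) k (E n l x))) :
    E (n + 1) k (E n l x) =
      E (n + 1) l.succ (E n ⟨(k : ℕ), lt_of_le_of_lt h l.isLt⟩ x) := by
  set y := E (n + 1) k (E n l x) with hy
  set y' := E (n + 1) l.succ (E n ⟨(k : ℕ), lt_of_le_of_lt h l.isLt⟩ x) with hy'
  set s : Fin (n + 2) → Bool → P.X (n + 1) := fun i α => P.face i α y with hs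
  have hshell : P.IsShell s := fun j i hij α β => P.face_rel j i hij α β y
  have hbox : ∀ γ : Bool, P.AdmBox k γ s := by
    intro γ
    refine ⟨fun j i hij α β _ _ => hshell j i hij α β, ?_⟩
    intro p L hcompl
    obtain ⟨⟨hchain, hbnd⟩, hne, -⟩ := hcompl
    haveI : IsTrans (ℕ × Bool) (fun p q : ℕ × Bool => p.1 < q.1) :=
      ⟨fun a b c h1 h2 => h1.trans h2⟩
    have hpw : (p :: L).Pairwise (fun p q : ℕ × Bool => p.1 < q.1) :=
      List.isChain_iff_pairwise.mp hchain
    have hk2 := k.isLt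
    have hlen : (p :: L).length < n + 2 :=
      length_lt_of_pairwise _ (n + 2) ((k : ℕ) + 1) (by omega) (by omega) hpw
        (fun q hq => ⟨(hbnd q hq).1, (hbnd q hq).2, hne q hq⟩)
    have hdeg : DegAt P E (k : ℕ) y := ⟨k.isLt, E n l x, by rw [hy]⟩
    obtain ⟨a', hda⟩ := degAt_applyL P E hE (p :: L) (k : ℕ) y hdeg hpw
      (fun q hq => ⟨(hbnd q hq).1, (hbnd q hq).2, hne q hq⟩) hlen
    exact thin_congr P (by simp) (apBoxAux_heq P y L p)
      (degAt_thin P E hE hda)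
  have hadm : P.AdmShell s := by
    refine ⟨hshell, k, k, false, true, by simp, ?_, ?_, ?_, hbox false, hbox true⟩
    · rintro ⟨-, h2, -⟩; exact h2 ((k : ℕ) + 1, true) (by simp) rfl
    · rintro ⟨-, h2, -⟩; exact h2 ((k : ℕ) + 1, false) (by simp) rfl
    · show P.face k false y = P.face k true y
      rw [hy, hE.2.1 (n + 1) k false (E n l x), hE.2.1 (n + 1) k true (E n l x)]
  obtain ⟨w, -, huniq⟩ := hP.2.1 (n + 1) s hadm
  have h1 : y = w := huniq y ⟨hE.1 _ _ _, fun i α => rfl⟩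
  have h2 : y' = w := huniq y' ⟨hE.1 _ _ _, fun i α => hfaces i α⟩
  exact h1.trans h2.symm

/-- in a complete stratified precubical set the degeneracies satisfy
`ε_k ε_l x = ε_{l+1} ε_k x` for `k ≤ l`. -/
theorem deg_deg (P : SPS) (hP : P.IsComplete)
    (E : ∀ n : ℕ, Fin (n + 1) → P.X n → P.X (n + 1)) (hE : P.IsDegSys E)
    (n : ℕ) (l : Fin (n + 1)) (k : Fin (n + 2)) (h : (k : ℕ) ≤ (l : ℕ)) (x : P.X n) :
    E (n + 1) k (E n l x) =
      E (n + 1) l.succ (E n ⟨(k : ℕ), by have := l.isLt; omega⟩ x) := by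
  induction n with
  | zero =>
    apply deg_deg_of_faces P hP E hE 0 l k h x
    intro i α
    have hl0 : (l : ℕ) = 0 := by omega
    have hi : (i : ℕ) = 0 ∨ (i : ℕ) = 1 := by omega
    rcases hi with hi | hi
    · have : i = k := Fin.ext (by omega)
      rw [this]
      exact face_eq_at_k P E hE 0 l k h x α
    · have : i = l.succ := Fin.ext (by simp only [Fin.val_succ]; omega)
      subst this
      exact face_eq_at_lsucc P E hE 0 l k h x α
  | succ m ih =>
    have key : ∀ (a b c : ℕ) (pa : a < m + 2) (pb : b < m + 1) (pc : c < m + 2)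
        (pa' : a < m + 1), a ≤ b → c = b + 1 → ∀ w : P.X m,
        E (m + 1) ⟨a, pa⟩ (E m ⟨b, pb⟩ w) = E (m + 1) ⟨c, pc⟩ (E m ⟨a, pa'⟩ w) := by
      intro a b c pa pb pc pa' hab hc w
      subst hc
      exact ih ⟨b, pb⟩ ⟨a, pa⟩ hab w
    apply deg_deg_of_faces P hP E hE (m + 1) l k h x
    intro i α
    have hk2 := k.isLt
    have hl2 := l.isLt
    have hi2 := i.isLt
    rcases Nat.lt_trichotomy (i : ℕ) (k : ℕ) with hik | hik | hik
    · -- i < k ≤ l, so l ≥ 1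
      rw [hE.2.2.1 (m + 1) k i α (E (m + 1) l x) hik]
      rw [hE.2.2.1 (m + 1) l.succ i α _ (show (i : ℕ) < ((l.succ : Fin (m + 3)) : ℕ) by
        simp [Fin.val_succ]; omega)]
      rw [hE.2.2.1 m l ⟨(i : ℕ), by omega⟩ α x (show (i : ℕ) < (l : ℕ) by omega)]
      rw [hE.2.2.1 m ⟨(k : ℕ), by omega⟩ ⟨(i : ℕ), by omega⟩ α x
        (show (i : ℕ) < (k : ℕ) by omega)]
      exact (key ((k : ℕ) - 1) ((l : ℕ) - 1) (((l.succ : Fin (m + 3)) : ℕ) - 1)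
        (by omega) (by omega) (by simp only [Fin.val_succ]; omega) (by omega)
        (by omega) (by simp only [Fin.val_succ]; omega) _).symm
    · have : i = k := Fin.ext hik
      rw [this]
      exact face_eq_at_k P E hE (m + 1) l k h x α
    · rcases Nat.lt_trichotomy (i : ℕ) ((l : ℕ) + 1) with hil | hil | hil
      · -- k < i ≤ l
        rw [hE.2.2.2 (m + 1) k i α (E (m + 1) l x) hik]
        rw [hE.2.2.1 m l ⟨(i : ℕ) - 1, by omega⟩ α x (show (i : ℕ) - 1 < (l : ℕ) by omega)]
        rw [hE.2.2.1 (m + 1) l.succ i α _ (show (i : ℕ) < ((l.succ : Fin (m + 3)) : ℕ) by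
          simp [Fin.val_succ]; omega)]
        rw [hE.2.2.2 m ⟨(k : ℕ), by omega⟩ ⟨(i : ℕ), by omega⟩ α x
          (show (k : ℕ) < (i : ℕ) by omega)]
        exact (key (k : ℕ) ((l : ℕ) - 1) (((l.succ : Fin (m + 3)) : ℕ) - 1)
          (by omega) (by omega) (by simp only [Fin.val_succ]; omega) (by omega)
          (by omega) (by simp only [Fin.val_succ]; omega) _).symm
      · have : i = l.succ := Fin.ext (by simp only [Fin.val_succ]; omega)
        subst this
        exact face_eq_at_lsucc P E hE (m + 1) l k h x α
      · -- i > l + 1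
        rw [hE.2.2.2 (m + 1) k i α (E (m + 1) l x) hik]
        rw [hE.2.2.2 m l ⟨(i : ℕ) - 1, by omega⟩ α x (show (l : ℕ) < (i : ℕ) - 1 by omega)]
        rw [hE.2.2.2 (m + 1) l.succ i α _ (show ((l.succ : Fin (m + 3)) : ℕ) < (i : ℕ) by
          simp [Fin.val_succ]; omega)]
        rw [hE.2.2.2 m ⟨(k : ℕ), by omega⟩ ⟨(i : ℕ) - 1, by omega⟩ α x
          (show (k : ℕ) < (i : ℕ) - 1 by omega)]
        exact (key (k : ℕ) (l : ℕ) ((l.succ : Fin (m + 3)) : ℕ)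
          (by omega) (by omega) (by simp only [Fin.val_succ]; omega) (by omega)
          h (by simp [Fin.val_succ]) _).symm

end CubicalNerve
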